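/- Let κ : ℕ → Cardinal be a sequence of nonzero cardinals, and let G_κ = ⊕ₙ (ℤ/2)^{κₙ} with the box topology. Then G_κ is sequential if and only if κₙ ≤ ℵ₀ for every n. -/

import Mathlib

open Topology Set

/-- The box topology on a countable product. -/
def boxTopology (G : ℕ → Type*) [∀ n, TopologicalSpace (G n)] :
    TopologicalSpace (Π n, G n) :=
  TopologicalSpace.generateFrom
    {S | ∃ U : (n : ℕ) → Set (G n), (∀ n, IsOpen (U n)) ∧ S = Set.pi Set.univ U}

/-- The direct sum `⊕ₙ Gₙ`: the subgroup of eventually-zero sequences. -/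
def directSum (G : ℕ → Type*) [∀ n, AddGroup (G n)] : AddSubgroup (Π n, G n) where
  carrier := {f | ∀ᶠ n in Filter.atTop, f n = 0}
  zero_mem' := Filter.Eventually.of_forall fun _ => rfl
  add_mem' := by
    intro a b ha hb
    filter_upwards [ha, hb] with n h1 h2
    simp [Pi.add_apply, h1, h2]
  neg_mem' := by
    intro a ha
    filter_upwards [ha] with n h1
    simp [Pi.neg_apply, h1]

/-- The direct sum endowed with (the restriction of) the box topology. -/
def boxSumTopology (G : ℕ → Type*) [∀ n, AddGroup (G n)] [∀ n, TopologicalSpace (G n)] :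
    TopologicalSpace ↥(directSum G) :=
  (boxTopology G).induced Subtype.val

/-! ### Auxiliary lemmas -/

section BoxLemmas

variable {G : ℕ → Type*} [∀ n, TopologicalSpace (G n)]

theorem box_isOpen_pi {U : ∀ n, Set (G n)} (hU : ∀ n, IsOpen (U n)) :
    IsOpen[boxTopology G] (Set.pi Set.univ U) :=
  TopologicalSpace.GenerateOpen.basic _ ⟨U, hU, rfl⟩

theorem box_exists_basic {S : Set (Π n, G n)} (hS : IsOpen[boxTopology G] S)
    {x : Π n, G n} (hx : x ∈ S) :
    ∃ U : ∀ n, Set (G n), (∀ n, IsOpen (U n)) ∧ x ∈ Set.pi Set.univ U ∧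
      Set.pi Set.univ U ⊆ S := by
  have hS' : TopologicalSpace.GenerateOpen
      {S | ∃ U : (n : ℕ) → Set (G n), (∀ n, IsOpen (U n)) ∧ S = Set.pi Set.univ U} S := hS
  clear hS
  revert hx
  induction hS' with
  | basic s hs =>
      intro hx
      obtain ⟨U, hU, rfl⟩ := hs
      exact ⟨U, hU, hx, subset_rfl⟩
  | univ =>
      intro _
      exact ⟨fun _ => Set.univ, fun _ => isOpen_univ, by simp, by simp⟩
  | inter s t hs ht ihs iht =>
      intro hx
      obtain ⟨U, hU, hxU, hUs⟩ := ihs hx.1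
      obtain ⟨V, hV, hxV, hVt⟩ := iht hx.2
      refine ⟨fun n => U n ∩ V n, fun n => (hU n).inter (hV n),
        fun n _ => ⟨hxU n trivial, hxV n trivial⟩, fun y hy =>
        ⟨hUs fun n _ => (hy n trivial).1, hVt fun n _ => (hy n trivial).2⟩⟩
  | sUnion s hs ih =>
      intro hx
      obtain ⟨t, hts, hxt⟩ := hx
      obtain ⟨U, hU, h1, h2⟩ := ih t hts hxt
      exact ⟨U, hU, h1, h2.trans (Set.subset_sUnion_of_mem hts)⟩

theorem box_continuous_eval (n : ℕ) :
    Continuous[boxTopology G, inferInstance] fun f : Π m, G m => f n := by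
  classical
  refine continuous_def.mpr fun V hV => ?_
  have hset : (fun f : Π m, G m => f n) ⁻¹' V =
      Set.pi Set.univ fun m => if hm : m = n then hm.symm ▸ V else Set.univ := by
    ext f
    constructor
    · intro hf m _
      by_cases hm : m = n
      · subst hm
        show f m ∈ if hm : m = m then hm.symm ▸ V else Set.univ
        rw [dif_pos rfl]
        exact hf
      · show f m ∈ if hm : m = n then hm.symm ▸ V else Set.univ
        rw [dif_neg hm]
        trivial
    · intro hf
      have h2 : f n ∈ if hm : n = n then hm.symm ▸ V else Set.univ := hf n (Set.mem_univ n)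
      rwa [dif_pos rfl] at h2
  rw [hset]
  refine box_isOpen_pi fun m => ?_
  show IsOpen (if hm : m = n then hm.symm ▸ V else Set.univ)
  by_cases hm : m = n
  · subst hm
    rw [dif_pos rfl]
    exact hV
  · rw [dif_neg hm]
    exact isOpen_univ

theorem boxTopology_le_pi : boxTopology G ≤ Pi.topologicalSpace :=
  le_iInf fun n => continuous_iff_le_induced.mp (box_continuous_eval n)

theorem tendsto_box_of_tendsto_pi [∀ n, Zero (G n)] {u : ℕ → Π j, G j} {x : Π j, G j}
    {M : ℕ} (hu : ∀ k j, M ≤ j → u k j = 0) (hx : ∀ j, M ≤ j → x j = 0)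
    (h : Filter.Tendsto u Filter.atTop (𝓝 x)) :
    Filter.Tendsto u Filter.atTop (@nhds _ (boxTopology G) x) := by
  rw [@tendsto_nhds _ (boxTopology G)]
  intro S hS hxS
  obtain ⟨U, hUo, hxU, hUS⟩ := box_exists_basic hS hxS
  have hO : IsOpen (Set.pi (Set.Iio M) U) :=
    isOpen_set_pi (Set.finite_Iio M) fun j _ => hUo j
  have hmem : x ∈ Set.pi (Set.Iio M) U := fun j _ => hxU j trivial
  have hev : ∀ᶠ k in Filter.atTop, u k ∈ Set.pi (Set.Iio M) U :=
    h (hO.mem_nhds hmem)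
  have : ∀ᶠ k in Filter.atTop, u k ∈ S := by
    filter_upwards [hev] with k hk
    refine hUS fun j _ => ?_
    rcases lt_or_ge j M with hj | hj
    · exact hk j hj
    · rw [hu k j hj, ← hx j hj]
      exact hxU j trivial
  exact this

end BoxLemmas

theorem mem_directSum {G : ℕ → Type*} [∀ n, AddGroup (G n)] {f : Π n, G n} :
    f ∈ directSum G ↔ ∀ᶠ n in Filter.atTop, f n = 0 := Iff.rfl

/-- the "restricted tube" used in the inductive construction. -/
def QSet {ι : ℕ → Type*} (p : Π m, ι m → ZMod 2) (U : ∀ j, Set (ι j → ZMod 2)) (m : ℕ) :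
    Set (Π m', ι m' → ZMod 2) :=
  {f | (∀ j, j < m → f j ∈ U j) ∧ ∀ j, m ≤ j → f j = p j}

theorem mem_QSet {ι : ℕ → Type*} {p : Π m, ι m → ZMod 2} {U : ∀ j, Set (ι j → ZMod 2)}
    {m : ℕ} {f : Π m', ι m' → ZMod 2} :
    f ∈ QSet p U m ↔ (∀ j, j < m → f j ∈ U j) ∧ ∀ j, m ≤ j → f j = p j := Iff.rfl

theorem QSet_congr {ι : ℕ → Type*} {p : Π m, ι m → ZMod 2}
    {U U' : ∀ j, Set (ι j → ZMod 2)} {m : ℕ} (h : ∀ j, j < m → U j = U' j) :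
    QSet p U m = QSet p U' m := by
  ext f
  simp only [mem_QSet]
  constructor <;> rintro ⟨h1, h2⟩ <;> refine ⟨fun j hj => ?_, h2⟩
  · rw [← h j hj]; exact h1 j hj
  · rw [h j hj]; exact h1 j hj

/-- the compact pieces -/
def KMSet (ι : ℕ → Type*) (M : ℕ) : Set (Π m, ι m → ZMod 2) :=
  {f | ∀ j, M ≤ j → f j = 0}

/-! ### Forward direction -/

theorem forward_aux (ι : ℕ → Type*) (n : ℕ) (hn : ¬ Countable (ι n))
    (hseq : @SequentialSpace ↥(directSum fun m => ι m → ZMod 2)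
      (boxSumTopology fun m => ι m → ZMod 2)) : False := by
  classical
  set τ := boxSumTopology fun m => ι m → ZMod 2 with hτ
  set B : Set ↥(directSum fun m => ι m → ZMod 2) :=
    {f | Set.Countable {i : ι n | f.val n i ≠ 0}} with hB
  -- B is sequentially closed
  have hBseq : @IsSeqClosed _ τ B := by
    intro u x hu hux
    have hnhds : @nhds _ τ x = Filter.comap Subtype.val
        (@nhds _ (boxTopology fun m => ι m → ZMod 2) x.val) :=
      @nhds_induced _ _ (boxTopology fun m => ι m → ZMod 2) Subtype.val x
    rw [hnhds, Filter.tendsto_comap_iff] at hux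
    have htpi : Filter.Tendsto (fun k => (u k).val) Filter.atTop (𝓝 x.val) :=
      hux.mono_right (nhds_mono boxTopology_le_pi)
    have h2 : ∀ i : ι n, Filter.Tendsto (fun k => (u k).val n i) Filter.atTop
        (𝓝 (x.val n i)) := fun i =>
      tendsto_pi_nhds.mp (tendsto_pi_nhds.mp htpi n) i
    have h3 : {i : ι n | x.val n i ≠ 0} ⊆ ⋃ k, {i : ι n | (u k).val n i ≠ 0} := by
      intro i hi
      have : ∀ᶠ k in Filter.atTop, (u k).val n i = x.val n i :=
        (h2 i) ((isOpen_discrete {x.val n i}).mem_nhds rfl)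
      obtain ⟨k, hk⟩ := this.exists
      exact Set.mem_iUnion.mpr ⟨k, by rw [Set.mem_setOf_eq, hk]; exact hi⟩
    exact Set.Countable.mono h3 (Set.countable_iUnion fun k => hu k)
  have hBclosed : @IsClosed _ τ B := @IsSeqClosed.isClosed _ τ hseq B hBseq
  -- the point p = single n (const 1)
  set c : ι n → ZMod 2 := fun _ => 1 with hc
  have hpmem : (Pi.single (M := fun m => ι m → ZMod 2) n c) ∈
      directSum fun m => ι m → ZMod 2 := by
    refine Filter.eventually_atTop.mpr ⟨n + 1, fun m hm => ?_⟩
    exact Pi.single_eq_of_ne (by omega) _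
  set p : ↥(directSum fun m => ι m → ZMod 2) := ⟨Pi.single n c, hpmem⟩ with hp
  have hpB : p ∉ B := by
    intro hmem
    have huniv : {i : ι n | p.val n i ≠ 0} = Set.univ := by
      ext i
      simp only [Set.mem_setOf_eq, Set.mem_univ, iff_true, hp]
      rw [Pi.single_eq_same]
      exact one_ne_zero
    rw [hB, Set.mem_setOf_eq, huniv] at hmem
    exact hn (Set.countable_univ_iff.mp hmem)
  -- p is in the closure of B
  have hpcl : p ∈ @closure _ τ B := by
    rw [mem_closure_iff]
    intro O hO hpO
    obtain ⟨W, hW, rfl⟩ := (@isOpen_induced_iff _ _ (boxTopology fun m => ι m → ZMod 2)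
      O Subtype.val).mp hO
    obtain ⟨U, hUo, hpU, hUW⟩ := box_exists_basic hW hpO
    have hcU : c ∈ U n := by
      have h1 : Pi.single (M := fun m => ι m → ZMod 2) n c ∈ Set.pi Set.univ U := hpU
      have := h1 n trivial
      rwa [Pi.single_eq_same] at this
    obtain ⟨I, V, hIV, hsub⟩ := isOpen_pi_iff.mp (hUo n) c hcU
    set g : ι n → ZMod 2 := fun i => if i ∈ I then 1 else 0 with hg
    have hgU : g ∈ U n := by
      refine hsub fun i hi => ?_
      have : g i = c i := by
        show (if i ∈ I then (1 : ZMod 2) else 0) = c i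
        rw [if_pos (Finset.mem_coe.mp hi), hc]
      rw [this]
      exact (hIV i hi).2
    have hqmem : (Pi.single (M := fun m => ι m → ZMod 2) n g) ∈
        directSum fun m => ι m → ZMod 2 := by
      refine Filter.eventually_atTop.mpr ⟨n + 1, fun m hm => ?_⟩
      exact Pi.single_eq_of_ne (by omega) _
    have hqW : (Pi.single (M := fun m => ι m → ZMod 2) n g) ∈ Set.pi Set.univ U := by
      intro m _
      by_cases hm : m = n
      · subst hm
        rw [Pi.single_eq_same]
        exact hgU
      · rw [Pi.single_eq_of_ne hm]
        have h1 : Pi.single (M := fun m => ι m → ZMod 2) n c ∈ Set.pi Set.univ U := hpU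
        have := h1 m trivial
        rwa [Pi.single_eq_of_ne (M := fun m => ι m → ZMod 2) hm c] at this
    have hqB : (⟨Pi.single n g, hqmem⟩ : ↥(directSum fun m => ι m → ZMod 2)) ∈ B := by
      rw [hB, Set.mem_setOf_eq]
      refine Set.Countable.mono ?_ I.countable_toSet
      intro i hi
      simp only [Set.mem_setOf_eq] at hi
      rw [Pi.single_eq_same] at hi
      have hi' : (if i ∈ I then (1 : ZMod 2) else 0) ≠ 0 := hi
      by_contra hiI
      simp only [Finset.mem_coe] at hiI
      rw [if_neg hiI] at hi'
      exact hi' rfl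
    exact ⟨⟨Pi.single n g, hqmem⟩, hUW hqW, hqB⟩
  rw [hBclosed.closure_eq] at hpcl
  exact hpB hpcl

/-! ### Reverse direction -/

theorem reverse_aux (ι : ℕ → Type*) [∀ m, Countable (ι m)] :
    @SequentialSpace ↥(directSum fun m => ι m → ZMod 2)
      (boxSumTopology fun m => ι m → ZMod 2) := by
  classical
  set τ := boxSumTopology fun m => ι m → ZMod 2 with hτ
  refine @SequentialSpace.mk _ τ fun A hA => ?_
  rw [← isOpen_compl_iff, isOpen_iff_mem_nhds]
  rintro ⟨p, hpDS⟩ hpA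
  obtain ⟨N, hN⟩ := Filter.eventually_atTop.mp hpDS
  set A' : Set (Π m, ι m → ZMod 2) := Subtype.val '' A with hA'
  -- closedness of KM pieces
  have hKMclosed : ∀ M, IsClosed (KMSet ι M) := by
    intro M
    have : KMSet ι M = Set.pi {j | M ≤ j} fun j => ({0} : Set (ι j → ZMod 2)) := by
      ext f
      simp [KMSet, Set.mem_pi]
    rw [this]
    exact isClosed_set_pi fun j _ => isClosed_singleton
  have hKMsub : ∀ M, ∀ f ∈ KMSet ι M, f ∈ directSum fun m => ι m → ZMod 2 :=
    fun M f hf => Filter.eventually_atTop.mpr ⟨M, hf⟩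
  -- A' ∩ KM is closed, hence compact, in the product topology
  have hclosedAKM : ∀ M, IsClosed (A' ∩ KMSet ι M) := by
    intro M
    refine isClosed_of_closure_subset fun x hx => ?_
    have hxKM : x ∈ KMSet ι M :=
      closure_minimal Set.inter_subset_right (hKMclosed M) hx
    obtain ⟨u, hu, hconv⟩ := mem_closure_iff_seq_limit.mp hx
    have hbox : Filter.Tendsto u Filter.atTop
        (@nhds _ (boxTopology fun m => ι m → ZMod 2) x) :=
      tendsto_box_of_tendsto_pi (M := M) (fun k j hj => (hu k).2 j hj)
        (fun j hj => hxKM j hj) hconv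
    have hxDS : x ∈ directSum fun m => ι m → ZMod 2 := hKMsub M x hxKM
    have huDS : ∀ k, u k ∈ directSum fun m => ι m → ZMod 2 :=
      fun k => hKMsub M (u k) (hu k).2
    set v : ℕ → ↥(directSum fun m => ι m → ZMod 2) := fun k => ⟨u k, huDS k⟩ with hv
    have hvA : ∀ k, v k ∈ A := by
      intro k
      obtain ⟨a, haA, hav⟩ := (hu k).1
      have : a = v k := Subtype.ext hav
      rwa [this] at haA
    have hvt : Filter.Tendsto v Filter.atTop (@nhds _ τ ⟨x, hxDS⟩) := by
      rw [hτ, boxSumTopology,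
        @nhds_induced _ _ (boxTopology fun m => ι m → ZMod 2) Subtype.val,
        Filter.tendsto_comap_iff]
      exact hbox
    have : (⟨x, hxDS⟩ : ↥(directSum fun m => ι m → ZMod 2)) ∈ A := hA hvA hvt
    exact ⟨⟨⟨x, hxDS⟩, this, rfl⟩, hxKM⟩
  have hcomp : ∀ M, IsCompact (A' ∩ KMSet ι M) := fun M => (hclosedAKM M).isCompact
  -- the inductive step
  have step : ∀ (m : ℕ) (U : ∀ j, Set (ι j → ZMod 2)),
      ∃ V : Set (ι m → ZMod 2),
        ((∀ j, j < m → IsClosed (U j)) ∧ QSet p U m ∩ A' = ∅) →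
        (IsOpen V ∧ IsClosed V ∧ p m ∈ V ∧
          QSet p (Function.update U m V) (m + 1) ∩ A' = ∅) := by
    intro m U
    by_cases hyp : (∀ j, j < m → IsClosed (U j)) ∧ QSet p U m ∩ A' = ∅
    case neg => exact ⟨∅, fun h => absurd h hyp⟩
    obtain ⟨hclos, hdisj⟩ := hyp
    set D := {f : Π m', ι m' → ZMod 2 |
      (∀ j, j < m → f j ∈ U j) ∧ ∀ j, m < j → f j = p j} with hD
    have hDK : D ⊆ KMSet ι (max (m + 1) N) := by
      intro f hf j hj
      rw [hf.2 j (by omega), hN j (by omega)]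
    have hDclosed : IsClosed D := by
      have : D = Set.pi {j | j < m} (fun j => U j) ∩
          Set.pi {j | m < j} (fun j => {p j}) := by
        ext f
        simp [hD, Set.mem_pi]
      rw [this]
      exact (isClosed_set_pi fun j hj => hclos j hj).inter
        (isClosed_set_pi fun j _ => isClosed_singleton)
    have hADcomp : IsCompact (A' ∩ D) := by
      have heq : A' ∩ D = (A' ∩ KMSet ι (max (m + 1) N)) ∩ D := by
        ext f
        constructor
        · rintro ⟨h1, h2⟩
          exact ⟨⟨h1, hDK h2⟩, h2⟩
        · rintro ⟨⟨h1, _⟩, h2⟩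
          exact ⟨h1, h2⟩
      rw [heq]
      exact (hcomp _).inter_right hDclosed
    set E := (fun f : Π m', ι m' → ZMod 2 => f m) '' (A' ∩ D) with hE
    have hEclosed : IsClosed E := (hADcomp.image (continuous_apply m)).isClosed
    have hpE : p m ∈ Eᶜ := by
      rintro ⟨f, ⟨hfA, hfD⟩, hfm⟩
      have hfQ : f ∈ QSet p U m := by
        refine ⟨hfD.1, fun j hj => ?_⟩
        rcases eq_or_lt_of_le hj with h | h
        · subst h
          exact hfm
        · exact hfD.2 j h
      exact Set.eq_empty_iff_forall_notMem.mp hdisj f ⟨hfQ, hfA⟩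
    obtain ⟨I, V, hIV, hsub⟩ := isOpen_pi_iff.mp hEclosed.isOpen_compl (p m) hpE
    refine ⟨Set.pi (I : Set (ι m)) V, fun _ => ?_⟩
    refine ⟨isOpen_set_pi I.finite_toSet fun i hi => (hIV i hi).1,
      isClosed_set_pi fun i _ => isClosed_discrete _,
      fun i hi => (hIV i hi).2, ?_⟩
    rw [Set.eq_empty_iff_forall_notMem]
    rintro f ⟨hfQ, hfA⟩
    have hfD : f ∈ D := by
      refine ⟨fun j hj => ?_, fun j hj => hfQ.2 j (by omega)⟩
      have := hfQ.1 j (by omega)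
      rwa [Function.update_of_ne (by omega : j ≠ m)] at this
    have hfm : f m ∈ Set.pi (I : Set (ι m)) V := by
      have := hfQ.1 m (by omega)
      rwa [Function.update_self] at this
    exact hsub hfm ⟨f, ⟨hfA, hfD⟩, rfl⟩
  -- the recursive construction
  set F : ℕ → ∀ j, Set (ι j → ZMod 2) := fun m =>
    Nat.rec (fun _ => Set.univ)
      (fun m' U => Function.update U m' (Classical.choose (step m' U))) m with hF
  have hFsucc : ∀ m, F (m + 1) =
      Function.update (F m) m (Classical.choose (step m (F m))) := fun _ => rfl
  have hInv : ∀ m, (∀ j, j < m →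
      IsOpen (F m j) ∧ IsClosed (F m j) ∧ p j ∈ F m j) ∧ QSet p (F m) m ∩ A' = ∅ := by
    intro m
    induction m with
    | zero =>
        refine ⟨fun j hj => absurd hj (by omega), ?_⟩
        rw [Set.eq_empty_iff_forall_notMem]
        rintro f ⟨hfQ, hfA⟩
        have hfp : f = p := funext fun j => hfQ.2 j (by omega)
        subst hfp
        obtain ⟨a, haA, hav⟩ := hfA
        have : a = ⟨f, hpDS⟩ := Subtype.ext hav
        rw [this] at haA
        exact hpA haA
    | succ m ih =>
        have hspec := Classical.choose_spec (step m (F m))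
          ⟨fun j hj => (ih.1 j hj).2.1, ih.2⟩
        rw [hFsucc m]
        constructor
        · intro j hj
          rcases Nat.lt_succ_iff_lt_or_eq.mp hj with h | h
          · rw [Function.update_of_ne (by omega : j ≠ m)]
            exact ih.1 j h
          · subst h
            rw [Function.update_self]
            exact ⟨hspec.1, hspec.2.1, hspec.2.2.1⟩
        · exact hspec.2.2.2
  have hcoh : ∀ m j, j < m → F m j = F (j + 1) j := by
    intro m
    induction m with
    | zero => intro j hj; omega
    | succ m ih =>
        intro j hj
        rcases Nat.lt_succ_iff_lt_or_eq.mp hj with h | h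
        · rw [hFsucc m, Function.update_of_ne (by omega : j ≠ m)]
          exact ih j h
        · subst h
          rfl
  have hUo : ∀ j, IsOpen (F (j + 1) j) :=
    fun j => ((hInv (j + 1)).1 j (Nat.lt_succ_self j)).1
  have hpUfin : ∀ j, p j ∈ F (j + 1) j :=
    fun j => ((hInv (j + 1)).1 j (Nat.lt_succ_self j)).2.2
  have hQUfin : ∀ M, QSet p (fun j => F (j + 1) j) M ∩ A' = ∅ := by
    intro M
    have : QSet p (fun j => F (j + 1) j) M = QSet p (F M) M :=
      QSet_congr fun j hj => (hcoh M j hj).symm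
    rw [this]
    exact (hInv M).2
  -- conclusion
  rw [hτ, boxSumTopology,
    @nhds_induced _ _ (boxTopology fun m => ι m → ZMod 2) Subtype.val]
  refine Filter.mem_comap.mpr ⟨Set.pi Set.univ fun j => F (j + 1) j, ?_, ?_⟩
  · exact @IsOpen.mem_nhds _ (boxTopology fun m => ι m → ZMod 2) p _
      (box_isOpen_pi hUo) (fun j _ => hpUfin j)
  · rintro ⟨f, hfDS⟩ hf hfA
    obtain ⟨N2, hN2⟩ := Filter.eventually_atTop.mp hfDS
    have hfQ : f ∈ QSet p (fun j => F (j + 1) j) (max N N2) := by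
      refine ⟨fun j hj => hf j (Set.mem_univ j), fun j hj => ?_⟩
      rw [hN2 j (by omega), hN j (by omega)]
    exact Set.eq_empty_iff_forall_notMem.mp (hQUfin (max N N2)) f
      ⟨hfQ, ⟨⟨f, hfDS⟩, hfA, rfl⟩⟩

/-- For a sequence `κ` of nonzero cardinals, the group
`G_κ = ⊕ₙ (ℤ/2)^{κₙ}` with the box topology is sequential if and only if `κₙ ≤ ℵ₀`
for every `n`. -/
theorem statement18 (κ : ℕ → Cardinal) (hκ : ∀ n, κ n ≠ 0) :
    @SequentialSpace ↥(directSum (fun n => (κ n).out → ZMod 2))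
      (boxSumTopology (fun n => (κ n).out → ZMod 2)) ↔
    ∀ n, κ n ≤ Cardinal.aleph0 := by
  constructor
  · intro h n
    by_contra hlt
    have hn : ¬ Countable (κ n).out := by
      rw [← Cardinal.mk_le_aleph0_iff, Cardinal.mk_out]
      exact hlt
    exact forward_aux (fun m => (κ m).out) n hn h
  · intro h
    haveI : ∀ m, Countable (κ m).out := fun m =>
      Cardinal.mk_le_aleph0_iff.mp (by rw [Cardinal.mk_out]; exact h m)
    exact reverse_aux fun m => (κ m).out
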